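/- Let F : ℂⁿ → ℂᵐ be a polynomial map, and let P : Mat_{m,n}(ℂ) → ℂ be a homogeneous polynomial function of degree ≤ d in the matrix entries. Fix μ ∈ ℂ and suppose P(∑_{i=1}^d (JF)(α_i)) = μ for all α₁, ..., α_d ∈ ℂⁿ. Then for all s ∈ ℕ, all α₁, ..., α_s ∈ ℂⁿ, and all b₁, ..., b_s ∈ ℂ (with no constraint on ∑ b_i), P(∑_{i=1}^s b_i · (JF)(α_i)) = ((∑_{i=1}^s b_i)/d)^{deg P} · μ. -/

import Mathlib

open MvPolynomial

/-- The Jacobian matrix of a polynomial map `F : ℂⁿ → ℂᵐ`, evaluated at `α`. -/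
noncomputable def jacEval {n m : ℕ} (F : Fin m → MvPolynomial (Fin n) ℂ)
    (α : Fin n → ℂ) : Matrix (Fin m) (Fin n) ℂ :=
  Matrix.of fun i j => eval α (pderiv j (F i))

/-- Evaluation of a polynomial in the entries of an `m × n` matrix. -/
noncomputable def matPolyEval {n m : ℕ} (P : MvPolynomial (Fin m × Fin n) ℂ)
    (A : Matrix (Fin m) (Fin n) ℂ) : ℂ :=
  eval (fun p => A p.1 p.2) P

namespace Stmt14Aux

/-- Evaluation commutes with `bind₁`. -/
lemma eval_bind₁' {σ τ : Type*} (x : τ → ℂ) (g : σ → MvPolynomial τ ℂ)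
    (φ : MvPolynomial σ ℂ) :
    eval x (bind₁ g φ) = eval (fun i => eval x (g i)) φ := by
  rw [show eval x (bind₁ g φ) = (eval x : MvPolynomial τ ℂ →+* ℂ) (bind₁ g φ) from rfl,
    hom_bind₁]
  rw [show ((eval x : MvPolynomial τ ℂ →+* ℂ)).comp (C : ℂ →+* MvPolynomial τ ℂ)
      = RingHom.id ℂ from RingHom.ext fun a => by simp]
  rfl

/-- Substituting polynomials of total degree at most 1 does not increase total degree. -/
lemma totalDegree_bind₁_le {σ τ : Type*} (g : σ → MvPolynomial τ ℂ)
    (hg : ∀ i, (g i).totalDegree ≤ 1) (p : MvPolynomial σ ℂ) :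
    (bind₁ g p).totalDegree ≤ p.totalDegree := by
  conv_lhs => rw [p.as_sum]
  rw [map_sum]
  refine (totalDegree_finset_sum _ _).trans (Finset.sup_le fun a ha => ?_)
  rw [bind₁_monomial]
  refine (totalDegree_mul _ _).trans ?_
  rw [totalDegree_C, zero_add]
  refine le_trans ((totalDegree_finset_prod _ _).trans ?_) (le_totalDegree ha)
  simp only [Finsupp.sum]
  refine Finset.sum_le_sum fun i _ => ?_
  refine (totalDegree_pow _ _).trans ?_
  calc a i * (g i).totalDegree ≤ a i * 1 := Nat.mul_le_mul_left _ (hg i)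
    _ = a i := mul_one _

lemma totalDegree_addOne_pow_sub {σ : Type*} (j : σ) (e : ℕ) :
    ((X j + 1 : MvPolynomial σ ℂ) ^ e - X j ^ e).totalDegree ≤ e - 1 := by
  rw [add_pow, Finset.sum_range_succ]
  simp only [Nat.choose_self, Nat.cast_one, mul_one, Nat.sub_self, pow_zero, one_pow]
  rw [add_sub_cancel_right]
  refine (totalDegree_finset_sum _ _).trans (Finset.sup_le fun q hq => ?_)
  refine (totalDegree_mul _ _).trans ?_
  rw [← map_natCast (C : ℂ →+* MvPolynomial σ ℂ) (e.choose q), totalDegree_C, add_zero]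
  refine (totalDegree_pow _ _).trans ?_
  have := Finset.mem_range.mp hq
  calc q * (X j : MvPolynomial σ ℂ).totalDegree ≤ q * 1 :=
      Nat.mul_le_mul_left _ (by rw [totalDegree_X])
    _ = q := mul_one _
    _ ≤ e - 1 := by omega

variable {r : ℕ}

/-- shift of the `i`-th variable by 1 -/
noncomputable def shiftFun (i j : Fin r) : MvPolynomial (Fin r) ℂ :=
  if j = i then X j + 1 else X j

lemma eval_bind_shift (i : Fin r) (q : MvPolynomial (Fin r) ℂ) (c : Fin r → ℕ) :
    eval (fun j => (c j : ℂ)) (bind₁ (shiftFun i) q)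
      = eval (fun j => ((Function.update c i (c i + 1)) j : ℂ)) q := by
  rw [eval_bind₁']
  have hpt : (fun j => eval (fun j' => ((c j' : ℕ) : ℂ)) (shiftFun i j))
      = fun j => ((Function.update c i (c i + 1) j : ℕ) : ℂ) := by
    funext j
    by_cases hj : j = i
    · subst hj
      simp [shiftFun]
    · simp [shiftFun, hj, Function.update_of_ne hj]
  rw [hpt]

lemma totalDegree_delta_le (i : Fin r) (e : ℕ) (q : MvPolynomial (Fin r) ℂ)
    (hq : q.totalDegree ≤ e + 1) :
    (bind₁ (shiftFun i) q - q).totalDegree ≤ e := by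
  conv_lhs => rw [q.as_sum]
  rw [map_sum, ← Finset.sum_sub_distrib]
  refine (totalDegree_finset_sum _ _).trans (Finset.sup_le fun a ha => ?_)
  have hsum : (a.sum fun _ e => e) ≤ e + 1 := (le_totalDegree ha).trans hq
  by_cases hai : a i = 0
  · have hfix : bind₁ (shiftFun i) (monomial a (coeff a q)) = monomial a (coeff a q) := by
      rw [bind₁_monomial, monomial_eq]
      congr 1
      simp only [Finsupp.prod]
      refine Finset.prod_congr rfl fun j hj => ?_
      have hji : j ≠ i := by
        intro hcon
        exact (Finsupp.mem_support_iff.mp hj) (hcon ▸ hai)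
      simp [shiftFun, hji]
    rw [hfix, sub_self]
    simp
  · have hmem : i ∈ a.support := Finsupp.mem_support_iff.mpr hai
    rw [bind₁_monomial, monomial_eq]
    simp only [Finsupp.prod]
    have hprod1 : (∏ j ∈ a.support, shiftFun i j ^ a j)
        = (X i + 1) ^ a i * ∏ j ∈ a.support.erase i, X j ^ a j := by
      rw [← Finset.mul_prod_erase _ _ hmem]
      congr 1
      · simp [shiftFun]
      · exact Finset.prod_congr rfl fun j hj => by
          simp [shiftFun, Finset.ne_of_mem_erase hj]
    have hprod2 : (∏ j ∈ a.support, (X j : MvPolynomial (Fin r) ℂ) ^ a j)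
        = X i ^ a i * ∏ j ∈ a.support.erase i, X j ^ a j :=
      (Finset.mul_prod_erase _ _ hmem).symm
    rw [hprod1, hprod2]
    have hring : C (coeff a q) * ((X i + 1) ^ a i * ∏ j ∈ a.support.erase i, X j ^ a j)
        - C (coeff a q) * ((X i : MvPolynomial (Fin r) ℂ) ^ a i * ∏ j ∈ a.support.erase i, X j ^ a j)
        = C (coeff a q) * (((X i + 1) ^ a i - X i ^ a i) * ∏ j ∈ a.support.erase i, X j ^ a j) := by
      ring
    rw [hring]
    refine (totalDegree_mul _ _).trans ?_
    rw [totalDegree_C, zero_add]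
    refine (totalDegree_mul _ _).trans ?_
    have hA : ((X i + 1 : MvPolynomial (Fin r) ℂ) ^ a i - X i ^ a i).totalDegree ≤ a i - 1 :=
      totalDegree_addOne_pow_sub i (a i)
    have hB : (∏ j ∈ a.support.erase i, (X j : MvPolynomial (Fin r) ℂ) ^ a j).totalDegree
        ≤ ∑ j ∈ a.support.erase i, a j := by
      refine (totalDegree_finset_prod _ _).trans ?_
      refine Finset.sum_le_sum fun j _ => ?_
      refine (totalDegree_pow _ _).trans ?_
      calc a j * (X j : MvPolynomial (Fin r) ℂ).totalDegree ≤ a j * 1 :=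
          Nat.mul_le_mul_left _ (by rw [totalDegree_X])
        _ = a j := mul_one _
    have hsplit : a i + ∑ j ∈ a.support.erase i, a j = a.sum fun _ e => e := by
      simp only [Finsupp.sum]
      exact Finset.add_sum_erase _ _ hmem
    have := add_le_add hA hB
    omega

lemma vanish_nat (e : ℕ) : ∀ q : MvPolynomial (Fin r) ℂ,
    q.totalDegree ≤ e →
    (∀ c : Fin r → ℕ, (∑ i, c i) ≤ e → eval (fun i => (c i : ℂ)) q = 0) →
    ∀ c : Fin r → ℕ, eval (fun i => (c i : ℂ)) q = 0 := by
  induction e with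
  | zero =>
    intro q hq hv c
    have hsupp := (totalDegree_eq_zero_iff (p := q)).mp (Nat.le_zero.mp hq)
    have : eval (fun i => (c i : ℂ)) q = eval (fun i => ((0 : ℕ) : ℂ)) q := by
      rw [eval_eq', eval_eq']
      refine Finset.sum_congr rfl fun a ha => ?_
      congr 1
      refine Finset.prod_congr rfl fun i _ => ?_
      rw [hsupp a ha i]
      simp
    rw [this]
    exact hv (fun _ => 0) (by simp)
  | succ e ih =>
    intro q hq hv
    have hD : ∀ i : Fin r, ∀ c : Fin r → ℕ,
        eval (fun j => (c j : ℂ)) (bind₁ (shiftFun i) q - q) = 0 := by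
      intro i
      refine ih _ (totalDegree_delta_le i e q hq) ?_
      intro c hc
      rw [map_sub, eval_bind_shift, sub_eq_zero]
      have hupd : (∑ j, Function.update c i (c i + 1) j) = (∑ j, c j) + 1 := by
        rw [Finset.sum_update_of_mem (Finset.mem_univ i)]
        have h2 : ∑ j, c j = c i + ∑ j ∈ Finset.univ \ {i}, c j := by
          rw [← Finset.erase_eq]
          exact (Finset.add_sum_erase _ _ (Finset.mem_univ i)).symm
        omega
      rw [hv _ (by omega)]
      rw [hv c (by omega)]
    suffices H : ∀ N (c : Fin r → ℕ), (∑ i, c i) = N → eval (fun i => (c i : ℂ)) q = 0 by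
      exact fun c => H _ c rfl
    intro N
    induction N using Nat.strong_induction_on with
    | _ N IH =>
      intro c hc
      by_cases hN : N ≤ e + 1
      · exact hv c (by omega)
      · have hex : ∃ i, c i ≠ 0 := by
          by_contra hall
          push_neg at hall
          rw [Finset.sum_congr rfl fun i _ => hall i] at hc
          simp at hc
          omega
        obtain ⟨i, hi⟩ := hex
        set c' := Function.update c i (c i - 1) with hc'def
        have hcc : Function.update c' i (c' i + 1) = c := by
          funext j
          by_cases hj : j = i
          · subst hj; simp [hc'def]; omega
          · simp [hc'def, Function.update_of_ne hj]
        have hsum' : (∑ j, c' j) = N - 1 := by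
          rw [hc'def, Finset.sum_update_of_mem (Finset.mem_univ i)]
          have h2 : ∑ j, c j = c i + ∑ j ∈ Finset.univ \ {i}, c j := by
            rw [← Finset.erase_eq]
            exact (Finset.add_sum_erase _ _ (Finset.mem_univ i)).symm
          omega
        have h1 : eval (fun j => (c' j : ℂ)) q = 0 := IH (N - 1) (by omega) c' hsum'
        have h2 := hD i c'
        rw [map_sub, eval_bind_shift, sub_eq_zero, hcc] at h2
        rw [h2, h1]

lemma vanish_complex (q : MvPolynomial (Fin r) ℂ)
    (h : ∀ c : Fin r → ℕ, eval (fun i => (c i : ℂ)) q = 0) (x : Fin r → ℂ) :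
    eval x q = 0 := by
  suffices H : ∀ j : ℕ, ∀ x : Fin r → ℂ,
      (∀ i : Fin r, j ≤ (i : ℕ) → ∃ N : ℕ, x i = (N : ℂ)) → eval x q = 0 by
    exact H r x (fun i hi => absurd i.isLt (by omega))
  intro j
  induction j with
  | zero =>
    intro x hx
    choose c hcx using fun i => hx i (Nat.zero_le _)
    rw [show x = fun i => (c i : ℂ) from funext fun i => hcx i]
    exact h c
  | succ j ihj =>
    intro x hx
    by_cases hjr : j < r
    · set jf : Fin r := ⟨j, hjr⟩ with hjf
      set g : Fin r → Polynomial ℂ :=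
        fun i => if i = jf then Polynomial.X else Polynomial.C (x i) with hg
      set Ψ : Polynomial ℂ := eval₂ Polynomial.C g q with hΨ
      have hev : ∀ t : ℂ, Polynomial.eval t Ψ = eval (Function.update x jf t) q := by
        intro t
        rw [hΨ, show Polynomial.eval t (eval₂ Polynomial.C g q)
            = (Polynomial.evalRingHom t) (eval₂ Polynomial.C g q) from rfl,
          eval₂_comp_left (Polynomial.evalRingHom t) Polynomial.C g q]
        rw [show (Polynomial.evalRingHom t).comp Polynomial.C = RingHom.id ℂ from
          RingHom.ext fun a => by simp]
        have hpt : ((Polynomial.evalRingHom t) ∘ g) = Function.update x jf t := by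
          funext i
          by_cases hij : i = jf
          · subst hij; simp [hg]
          · simp [hg, hij, Function.update_of_ne hij]
        rw [hpt]
        rfl
      have hroots : ∀ N : ℕ, Polynomial.eval ((N : ℕ) : ℂ) Ψ = 0 := by
        intro N
        rw [hev]
        refine ihj _ fun i hi => ?_
        by_cases hij : i = jf
        · subst hij; exact ⟨N, by simp⟩
        · have hij' : j + 1 ≤ (i : ℕ) := by
            rcases Nat.lt_or_ge (i : ℕ) (j + 1) with hlt | hge
            · exfalso
              have hieq : (i : ℕ) = j := by omega
              exact hij (Fin.ext hieq)
            · exact hge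
          rw [Function.update_of_ne hij]
          exact hx i hij'
      have hΨ0 : Ψ = 0 := by
        refine Polynomial.eq_zero_of_infinite_isRoot _ ?_
        refine Set.Infinite.mono ?_ (Set.infinite_range_of_injective
          (Nat.cast_injective : Function.Injective (Nat.cast : ℕ → ℂ)))
        rintro - ⟨N, rfl⟩
        exact hroots N
      have := hev (x jf)
      rw [hΨ0, Function.update_eq_self] at this
      simpa using this.symm
    · exact ihj x (fun i hi => hx i (by omega))

lemma central {d r : ℕ} (hd : 1 ≤ d) (q : MvPolynomial (Fin r) ℂ)
    (hdeg : q.totalDegree ≤ d)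
    (hvan : ∀ c : Fin r → ℕ, (∑ i, c i) = d → eval (fun i => (c i : ℂ)) q = 0)
    (x : Fin r → ℂ) (hx : (∑ i, x i) = (d : ℂ)) : eval x q = 0 := by
  cases r with
  | zero =>
    exfalso
    simp only [Finset.univ_eq_empty, Finset.sum_empty] at hx
    have hd0 : ((d : ℕ) : ℂ) = 0 := hx.symm
    rw [Nat.cast_eq_zero] at hd0
    omega
  | succ r' =>
    set g : Fin (r' + 1) → MvPolynomial (Fin r') ℂ :=
      Fin.snoc (fun i => X i) (C (d : ℂ) - ∑ j, X j) with hg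
    have hg1 : ∀ i, (g i).totalDegree ≤ 1 := by
      intro i
      refine Fin.lastCases ?_ ?_ i
      · rw [hg]
        simp only [Fin.snoc_last]
        refine (totalDegree_sub _ _).trans ?_
        rw [totalDegree_C]
        refine max_le (Nat.zero_le _) ?_
        refine (totalDegree_finset_sum _ _).trans ?_
        exact Finset.sup_le fun j _ => le_of_eq (totalDegree_X j)
      · intro i
        rw [hg]
        simp only [Fin.snoc_castSucc]
        exact le_of_eq (totalDegree_X i)
    set q' : MvPolynomial (Fin r') ℂ := bind₁ g q with hq'
    have hdeg' : q'.totalDegree ≤ d := (totalDegree_bind₁_le g hg1 q).trans hdeg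
    have hvan' : ∀ c : Fin r' → ℕ, (∑ i, c i) ≤ d → eval (fun i => (c i : ℂ)) q' = 0 := by
      intro c hc
      rw [hq', eval_bind₁']
      set cN : Fin (r' + 1) → ℕ := Fin.snoc c (d - ∑ i, c i) with hcN
      have hpt : (fun i => eval (fun i' => (c i' : ℂ)) (g i)) = fun i => ((cN i : ℕ) : ℂ) := by
        funext i
        refine Fin.lastCases ?_ ?_ i
        · rw [hg, hcN]
          simp only [Fin.snoc_last]
          rw [map_sub, eval_C, map_sum]
          simp only [eval_X]
          rw [Nat.cast_sub hc, Nat.cast_sum]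
        · intro i
          rw [hg, hcN]
          simp only [Fin.snoc_castSucc, eval_X]
      rw [hpt]
      refine hvan cN ?_
      rw [hcN, Fin.sum_univ_castSucc]
      simp only [Fin.snoc_castSucc, Fin.snoc_last]
      omega
    have hall : ∀ y : Fin r' → ℂ, eval y q' = 0 :=
      fun y => vanish_complex q' (vanish_nat d q' hdeg' hvan') y
    set y : Fin r' → ℂ := fun i => x (Fin.castSucc i) with hy
    have hpt2 : (fun i => eval y (g i)) = x := by
      funext i
      refine Fin.lastCases ?_ ?_ i
      · rw [hg]
        simp only [Fin.snoc_last]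
        rw [map_sub, eval_C, map_sum]
        simp only [eval_X]
        have hsum : (∑ i, x i) = (∑ i, y i) + x (Fin.last r') := by
          rw [Fin.sum_univ_castSucc]
        rw [hsum] at hx
        linear_combination -hx
      · intro i
        rw [hg]
        simp only [Fin.snoc_castSucc, eval_X]
        rfl
    have hkey : eval x q = eval y q' := by
      rw [hq', eval_bind₁', hpt2]
    rw [hkey]
    exact hall y

lemma eval_smul_of_homog {σ : Type*} [Fintype σ] {P : MvPolynomial σ ℂ} {k : ℕ}
    (h : P.IsHomogeneous k) (t : ℂ) (x : σ → ℂ) :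
    eval (fun i => t * x i) P = t ^ k * eval x P := by
  rw [eval_eq', eval_eq', Finset.mul_sum]
  refine Finset.sum_congr rfl fun a ha => ?_
  have hk : ∑ i, a i = k := by
    have h2 := h (mem_support_iff.mp ha)
    rw [← h2]
    rw [Finsupp.weight_apply]
    rw [Finsupp.sum_fintype _ _ (fun i => by simp)]
    simp [Finsupp.sum]
  rw [← hk]
  simp_rw [mul_pow]
  rw [Finset.prod_mul_distrib, Finset.prod_pow_eq_pow_sum]
  ring

end Stmt14Aux

open Stmt14Aux

theorem stmt_14 (n m d k : ℕ) (F : Fin m → MvPolynomial (Fin n) ℂ)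
    (P : MvPolynomial (Fin m × Fin n) ℂ) (hhom : P.IsHomogeneous k) (hkd : k ≤ d)
    (μ : ℂ)
    (h : ∀ α : Fin d → Fin n → ℂ, matPolyEval P (∑ i, jacEval F (α i)) = μ) :
    ∀ (s : ℕ) (α : Fin s → Fin n → ℂ) (b : Fin s → ℂ),
      matPolyEval P (∑ i, b i • jacEval F (α i)) = ((∑ i, b i) / (d : ℂ)) ^ k * μ := by
  rcases Nat.eq_zero_or_pos k with hk0 | hkpos
  · subst hk0
    intro s α b
    have hconst : ∀ x : (Fin m × Fin n) → ℂ, eval x P = eval (fun _ => (0 : ℂ)) P := by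
      intro x
      have h0 := eval_smul_of_homog hhom 0 x
      simp only [zero_mul, pow_zero, one_mul] at h0
      exact h0.symm
    have hμ : eval (fun _ : Fin m × Fin n => (0 : ℂ)) P = μ := by
      rw [← h (fun _ _ => 0)]
      exact (hconst _).symm
    rw [matPolyEval, hconst _, hμ, pow_zero, one_mul]
  · have hd1 : 1 ≤ d := hkpos.trans_le hkd
    have hdC : (d : ℂ) ≠ 0 := Nat.cast_ne_zero.mpr (by omega)
    have hdk : ((d : ℂ)) ^ k ≠ 0 := pow_ne_zero _ hdC
    intro s
    cases s with
    | zero =>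
      intro α b
      rw [show (∑ i, b i • jacEval F (α i)) = (0 : Matrix (Fin m) (Fin n) ℂ) from by simp]
      rw [show (∑ i : Fin 0, b i) = (0 : ℂ) from by simp]
      rw [matPolyEval]
      have h0 := eval_smul_of_homog hhom 0 (fun _ : Fin m × Fin n => (0 : ℂ))
      simp only [zero_mul] at h0
      rw [zero_pow hkpos.ne', zero_mul] at h0
      rw [show (fun p : Fin m × Fin n => (0 : Matrix (Fin m) (Fin n) ℂ) p.1 p.2)
          = (fun _ : Fin m × Fin n => (0 : ℂ)) from by funext p; simp]
      rw [h0, zero_div, zero_pow hkpos.ne', zero_mul]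
    | succ s' =>
      intro α
      set M : Fin (s' + 1) → Matrix (Fin m) (Fin n) ℂ := fun i => jacEval F (α i) with hM
      set Q : MvPolynomial (Fin (s' + 1)) ℂ :=
        bind₁ (fun p : Fin m × Fin n => ∑ i, C (M i p.1 p.2) * X i) P with hQ
      have hevalQ : ∀ b : Fin (s' + 1) → ℂ,
          eval b Q = matPolyEval P (∑ i, b i • M i) := by
        intro b
        rw [hQ, eval_bind₁', matPolyEval]
        have hpt : (fun p : Fin m × Fin n => eval b (∑ i, C (M i p.1 p.2) * X i))
            = fun p : Fin m × Fin n => (∑ i, b i • M i) p.1 p.2 := by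
          funext p
          rw [map_sum, Matrix.sum_apply]
          refine Finset.sum_congr rfl fun i _ => ?_
          rw [map_mul, eval_C, eval_X]
          simp [Matrix.smul_apply, smul_eq_mul, mul_comm]
        exact congrArg (fun v : (Fin m × Fin n) → ℂ => eval v P) hpt
      set QG : MvPolynomial (Fin (s' + 1)) ℂ :=
        C ((d : ℂ) ^ k) * Q - C μ * (∑ i, X i) ^ k with hQG
      have hevalQG : ∀ b : Fin (s' + 1) → ℂ,
          eval b QG = (d : ℂ) ^ k * matPolyEval P (∑ i, b i • M i) - μ * (∑ i, b i) ^ k := by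
        intro b
        simp only [hQG, map_sub, map_mul, map_pow, eval_C, map_sum, eval_X]
        rw [hevalQ b]
      have hdeg : QG.totalDegree ≤ d := by
        rw [hQG]
        refine (totalDegree_sub _ _).trans (max_le ?_ ?_)
        · refine (totalDegree_mul _ _).trans ?_
          rw [totalDegree_C, zero_add]
          refine le_trans ?_ hkd
          refine le_trans (totalDegree_bind₁_le _ ?_ P) hhom.totalDegree_le
          intro p
          refine (totalDegree_finset_sum _ _).trans (Finset.sup_le fun i _ => ?_)
          refine (totalDegree_mul _ _).trans ?_
          rw [totalDegree_C, zero_add, totalDegree_X]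
        · refine (totalDegree_mul _ _).trans ?_
          rw [totalDegree_C, zero_add]
          refine le_trans (totalDegree_pow _ _) (le_trans ?_ hkd)
          have hX1 : (∑ i : Fin (s' + 1), (X i : MvPolynomial (Fin (s' + 1)) ℂ)).totalDegree ≤ 1 :=
            (totalDegree_finset_sum _ _).trans
              (Finset.sup_le fun j _ => le_of_eq (totalDegree_X j))
          calc k * (∑ i : Fin (s' + 1), (X i : MvPolynomial (Fin (s' + 1)) ℂ)).totalDegree
              ≤ k * 1 := Nat.mul_le_mul_left _ hX1
            _ = k := mul_one _
      have hnat : ∀ c : Fin (s' + 1) → ℕ, (∑ i, c i) = d →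
          eval (fun i => (c i : ℂ)) QG = 0 := by
        intro c hc
        have hcard : Fintype.card ((i : Fin (s' + 1)) × Fin (c i)) = d := by
          simp [Fintype.card_sigma, hc]
        let e : ((i : Fin (s' + 1)) × Fin (c i)) ≃ Fin d := Fintype.equivFinOfCardEq hcard
        have hkey : matPolyEval P (∑ i, ((c i : ℕ) : ℂ) • M i) = μ := by
          rw [← h (fun j => α (e.symm j).1)]
          congr 1
          rw [← Equiv.sum_comp e (fun j => jacEval F (α (e.symm j).1))]
          simp only [Equiv.symm_apply_apply]
          rw [show (Finset.univ : Finset ((i : Fin (s' + 1)) × Fin (c i)))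
              = Finset.univ.sigma (fun _ => Finset.univ) from (Finset.univ_sigma_univ).symm,
            Finset.sum_sigma]
          refine Finset.sum_congr rfl fun i _ => ?_
          simp [hM, Nat.cast_smul_eq_nsmul]
        rw [hevalQG, hkey]
        have hsc : (∑ i, ((c i : ℕ) : ℂ)) = (d : ℂ) := by rw [← Nat.cast_sum, hc]
        rw [hsc]
        ring
      have hhyper : ∀ b : Fin (s' + 1) → ℂ, (∑ i, b i) = (d : ℂ) →
          matPolyEval P (∑ i, b i • M i) = μ := by
        intro b hb
        have h0 := central hd1 QG hdeg hnat b hb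
        rw [hevalQG, hb] at h0
        have h2 : (d : ℂ) ^ k * matPolyEval P (∑ i, b i • M i) = (d : ℂ) ^ k * μ := by
          linear_combination h0
        exact mul_left_cancel₀ hdk h2
      have hcase1 : ∀ b : Fin (s' + 1) → ℂ, (∑ i, b i) ≠ 0 →
          matPolyEval P (∑ i, b i • M i) = ((∑ i, b i) / (d : ℂ)) ^ k * μ := by
        intro b hσ
        have hb' : (∑ i, ((d : ℂ) / (∑ j, b j) * b i)) = (d : ℂ) := by
          rw [← Finset.mul_sum]
          field_simp
        have h1 := hhyper (fun i => (d : ℂ) / (∑ j, b j) * b i) hb'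
        have hmat : (∑ i, b i • M i)
            = ((∑ j, b j) / (d : ℂ)) • ∑ i, ((d : ℂ) / (∑ j, b j) * b i) • M i := by
          rw [Finset.smul_sum]
          refine Finset.sum_congr rfl fun i _ => ?_
          rw [smul_smul]
          congr 1
          field_simp
        rw [matPolyEval, hmat]
        have hsm := eval_smul_of_homog hhom ((∑ j, b j) / (d : ℂ))
          (fun p : Fin m × Fin n => (∑ i, ((d : ℂ) / (∑ j, b j) * b i) • M i) p.1 p.2)
        rw [show (fun p : Fin m × Fin n =>
            (((∑ j, b j) / (d : ℂ)) • ∑ i, ((d : ℂ) / (∑ j, b j) * b i) • M i) p.1 p.2)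
            = fun p : Fin m × Fin n => ((∑ j, b j) / (d : ℂ)) *
              ((∑ i, ((d : ℂ) / (∑ j, b j) * b i) • M i) p.1 p.2) from by
          funext p
          simp [Matrix.smul_apply, smul_eq_mul]]
        rw [hsm]
        rw [show eval (fun p : Fin m × Fin n =>
            (∑ i, ((d : ℂ) / (∑ j, b j) * b i) • M i) p.1 p.2) P
            = matPolyEval P (∑ i, ((d : ℂ) / (∑ j, b j) * b i) • M i) from rfl]
        rw [h1]
      intro b
      by_cases hσ : (∑ i, b i) = 0
      · set g : Fin (s' + 1) → Polynomial ℂ :=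
          fun i => if i = 0 then Polynomial.X + Polynomial.C (b i) else Polynomial.C (b i)
          with hgd
        set Ψ : Polynomial ℂ := eval₂ Polynomial.C g QG with hΨ
        have hev : ∀ t : ℂ, Polynomial.eval t Ψ = eval (Function.update b 0 (t + b 0)) QG := by
          intro t
          rw [hΨ, show Polynomial.eval t (eval₂ Polynomial.C g QG)
              = (Polynomial.evalRingHom t) (eval₂ Polynomial.C g QG) from rfl,
            eval₂_comp_left (Polynomial.evalRingHom t) Polynomial.C g QG]
          rw [show (Polynomial.evalRingHom t).comp Polynomial.C = RingHom.id ℂ from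
            RingHom.ext fun a => by simp]
          have hpt : ((Polynomial.evalRingHom t) ∘ g) = Function.update b 0 (t + b 0) := by
            funext i
            by_cases hi : i = 0
            · subst hi; simp [hgd]
            · simp [hgd, hi, Function.update_of_ne hi]
          rw [hpt]
          rfl
        have hσup : ∀ t : ℂ, (∑ i, Function.update b 0 (t + b 0) i) = t := by
          intro t
          rw [Finset.sum_update_of_mem (Finset.mem_univ 0)]
          have h2 : ∑ j, b j = b 0 + ∑ j ∈ Finset.univ \ {(0 : Fin (s' + 1))}, b j := by
            rw [← Finset.erase_eq]
            exact (Finset.add_sum_erase _ _ (Finset.mem_univ 0)).symm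
          rw [hσ] at h2
          linear_combination -h2
        have hroot : ∀ t : ℂ, t ≠ 0 → Polynomial.eval t Ψ = 0 := by
          intro t ht
          rw [hev t, hevalQG]
          rw [hcase1 _ (by rw [hσup t]; exact ht)]
          rw [hσup t, div_pow]
          field_simp
          ring
        have hΨ0 : Ψ = 0 := by
          refine Polynomial.eq_zero_of_infinite_isRoot _ ?_
          refine Set.Infinite.mono ?_ (Set.Finite.infinite_compl (Set.finite_singleton (0 : ℂ)))
          intro t ht
          exact hroot t ht
        have h00 := hev 0
        rw [hΨ0] at h00
        simp only [Polynomial.eval_zero] at h00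
        rw [zero_add, Function.update_eq_self] at h00
        rw [hevalQG, hσ] at h00
        rw [zero_pow hkpos.ne', mul_zero] at h00
        have hf : matPolyEval P (∑ i, b i • M i) = 0 := by
          have h3 := h00.symm
          rw [sub_zero] at h3
          exact (mul_eq_zero.mp h3).resolve_left hdk
        rw [hf, hσ, zero_div, zero_pow hkpos.ne', zero_mul]
      · exact hcase1 b hσ
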